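/- Confidence-radius recursion bound (key step of the main generalization theorem, giving Δ_m ≤ 4·Δ_m*): let Δ, ε, ō, L, c₁, c₂, C be nonnegative real numbers with c₁²·C ≤ c₂·L and Δ ≤ c₁·√(ε·(C·Δ + 3·ō)) + c₂·ε·L. Then Δ ≤ 4·(c₁·√(ε·ō) + c₂·ε·L). -/
import Mathlib


/-- Confidence-radius recursion bound (key step of the main generalization
theorem, giving `Δ_m ≤ 4·Δ_m*`). -/
theorem confidence_radius_recursion_bound
    (Δ ε obar L c₁ c₂ C : ℝ)
    (hΔ : 0 ≤ Δ) (hε : 0 ≤ ε) (hobar : 0 ≤ obar) (hL : 0 ≤ L)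
    (hc₁ : 0 ≤ c₁) (hc₂ : 0 ≤ c₂) (hC : 0 ≤ C)
    (hconst : c₁ ^ 2 * C ≤ c₂ * L)
    (hrec : Δ ≤ c₁ * Real.sqrt (ε * (C * Δ + 3 * obar)) + c₂ * ε * L) :
    Δ ≤ 4 * (c₁ * Real.sqrt (ε * obar) + c₂ * ε * L) := by
  have hx : (0:ℝ) ≤ ε * (C * Δ) := by positivity
  have hy : (0:ℝ) ≤ ε * (3 * obar) := by positivity
  -- subadditivity of sqrt
  have h1 : Real.sqrt (ε * (C * Δ + 3 * obar)) ≤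
      Real.sqrt (ε * (C * Δ)) + Real.sqrt (ε * (3 * obar)) := by
    have h := Real.sqrt_nonneg (ε * (C * Δ))
    have h' := Real.sqrt_nonneg (ε * (3 * obar))
    have hsq1 := Real.sq_sqrt hx
    have hsq2 := Real.sq_sqrt hy
    have : ε * (C * Δ + 3 * obar) ≤
        (Real.sqrt (ε * (C * Δ)) + Real.sqrt (ε * (3 * obar))) ^ 2 := by
      nlinarith [mul_nonneg h h']
    calc Real.sqrt (ε * (C * Δ + 3 * obar))
        ≤ Real.sqrt ((Real.sqrt (ε * (C * Δ)) + Real.sqrt (ε * (3 * obar))) ^ 2) :=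
          Real.sqrt_le_sqrt this
      _ = _ := Real.sqrt_sq (by positivity)
  -- c₁ √(εCΔ) ≤ (Δ + c₂ ε L)/2
  have h2 : c₁ * Real.sqrt (ε * (C * Δ)) ≤ (Δ + c₂ * ε * L) / 2 := by
    have e1 : c₁ * Real.sqrt (ε * (C * Δ)) = Real.sqrt (c₁ ^ 2 * (ε * (C * Δ))) := by
      rw [Real.sqrt_mul (sq_nonneg c₁), Real.sqrt_sq hc₁]
    rw [e1]
    have hle : c₁ ^ 2 * (ε * (C * Δ)) ≤ ((Δ + c₂ * ε * L) / 2) ^ 2 := by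
      have : c₁ ^ 2 * C * Δ ≤ c₂ * L * Δ := mul_le_mul_of_nonneg_right hconst hΔ
      nlinarith [mul_nonneg hε (mul_nonneg (mul_nonneg hc₂ hL) hΔ), sq_nonneg (Δ - c₂ * ε * L)]
    calc Real.sqrt (c₁ ^ 2 * (ε * (C * Δ)))
        ≤ Real.sqrt (((Δ + c₂ * ε * L) / 2) ^ 2) := Real.sqrt_le_sqrt hle
      _ = (Δ + c₂ * ε * L) / 2 := Real.sqrt_sq (by positivity)
  -- √(3 ε ō) ≤ 2 √(ε ō)
  have h3 : Real.sqrt (ε * (3 * obar)) ≤ 2 * Real.sqrt (ε * obar) := by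
    have hle : ε * (3 * obar) ≤ (2 * Real.sqrt (ε * obar)) ^ 2 := by
      have := Real.sq_sqrt (mul_nonneg hε hobar)
      nlinarith [mul_nonneg hε hobar]
    calc Real.sqrt (ε * (3 * obar))
        ≤ Real.sqrt ((2 * Real.sqrt (ε * obar)) ^ 2) := Real.sqrt_le_sqrt hle
      _ = 2 * Real.sqrt (ε * obar) := Real.sqrt_sq (by positivity)
  have hS := Real.sqrt_nonneg (ε * obar)
  nlinarith [mul_le_mul_of_nonneg_left h1 hc₁, mul_le_mul_of_nonneg_left h3 hc₁,
    mul_nonneg hc₁ hS, mul_nonneg (mul_nonneg hc₂ hε) hL]
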